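/- For n ≥ 5, with the notation q_j^(n) and m₁^(n) of the recursive construction for the ideals Iₙ, the polynomial identity (m₁^(n))^{n−2} = −x_{n−2}^{n−3} q₂^{(n−1)} q₁^{(n)} + x_{n−2}^{n−3} q₁^{(n−1)} q₂^{(n)} holds in K[x₁,...,xₙ]. -/

import Mathlib

set_option synthInstance.maxHeartbeats 1000000
set_option maxHeartbeats 1000000

open MvPolynomial Ideal CategoryTheory

noncomputable section

/-- The arithmetical rank of an ideal: the least `r` such that some `r` elements
generate `I` up to radical. -/
noncomputable def ara {R : Type*} [CommRing R] (I : Ideal R) : ℕ :=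
  sInf {r | ∃ a : Fin r → R, Ideal.radical (Ideal.span (Set.range a)) = Ideal.radical I}

/-- The height of an ideal: the infimum of the heights of the primes containing it. -/
noncomputable def idealHeight {R : Type*} [CommRing R] (I : Ideal R) : ℕ∞ :=
  ⨅ (P : PrimeSpectrum R) (_ : I ≤ P.asIdeal), Order.height P

/-- `m_i^{(n)} = (x₁⋯xₙ)/(x_{n-i}x_{n-i+1})`, as a polynomial in `K[x₁, x₂, …]`. -/
def mgen (K : Type*) [Field K] (i n : ℕ) : MvPolynomial ℕ K :=
  ∏ k ∈ Finset.Icc 1 n \ {n - i, n - i + 1}, X k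

/-- The ideal `Iₙ = (m₁^{(n)}, …, m_{n-1}^{(n)})`. -/
def In (K : Type*) [Field K] (n : ℕ) : Ideal (MvPolynomial ℕ K) :=
  Ideal.span {p | ∃ i, 1 ≤ i ∧ i ≤ n - 1 ∧ p = mgen K i n}

/-- The recursively defined first generator `q₁^{(n)}`. -/
def q1 (K : Type*) [Field K] : ℕ → MvPolynomial ℕ K
  | 4 => mgen K 2 4
  | 5 => X 5 * mgen K 2 4 - X 1 * X 2 * mgen K 1 5
  | (n + 6) => X (n + 6) * q1 K (n + 5) - X (n + 3) ^ (n + 2) * q1 K (n + 4) * mgen K 1 (n + 6)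
  | _ => 0

/-- The recursively defined second generator `q₂^{(n)}`. -/
def q2 (K : Type*) [Field K] : ℕ → MvPolynomial ℕ K
  | 4 => mgen K 1 4 + mgen K 3 4
  | 5 => X 5 * (mgen K 1 4 + mgen K 3 4) - X 2 * X 3 * mgen K 1 5
  | (n + 6) => X (n + 6) * q2 K (n + 5) - X (n + 3) ^ (n + 2) * q2 K (n + 4) * mgen K 1 (n + 6)
  | _ => 0

lemma mgen_one_aux (K : Type*) [Field K] (k : ℕ) :
    mgen K 1 (k + 5) = ∏ j ∈ Finset.Icc 1 (k + 3), X j := by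
  unfold mgen
  congr 1
  ext j
  simp only [Finset.mem_sdiff, Finset.mem_Icc, Finset.mem_insert, Finset.mem_singleton]
  omega

lemma mgen_step_aux (K : Type*) [Field K] (k : ℕ) :
    mgen K 1 (k + 6) = X (k + 4) * mgen K 1 (k + 5) := by
  rw [show mgen K 1 (k + 6) = ∏ j ∈ Finset.Icc 1 (k + 3 + 1), X j from mgen_one_aux K (k + 1),
    Finset.prod_Icc_succ_top (by omega), mgen_one_aux]
  ring

lemma key_aux (K : Type*) [Field K] (k : ℕ) :
    mgen K 1 (k + 5) ^ (k + 3) =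
      -(X (k + 3) ^ (k + 2)) * q2 K (k + 4) * q1 K (k + 5) +
        X (k + 3) ^ (k + 2) * q1 K (k + 4) * q2 K (k + 5) := by
  induction k with
  | zero =>
    have h14 : mgen K 1 4 = X 1 * X 2 := by
      unfold mgen
      rw [show Finset.Icc 1 4 \ {3, 4} = ({1, 2} : Finset ℕ) from by decide]
      simp [Finset.prod_pair]
    have h24 : mgen K 2 4 = X 1 * X 4 := by
      unfold mgen
      rw [show Finset.Icc 1 4 \ {2, 3} = ({1, 4} : Finset ℕ) from by decide]
      simp [Finset.prod_pair]
    have h34 : mgen K 3 4 = X 3 * X 4 := by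
      unfold mgen
      rw [show Finset.Icc 1 4 \ {1, 2} = ({3, 4} : Finset ℕ) from by decide]
      simp [Finset.prod_pair]
    have h15 : mgen K 1 5 = X 1 * X 2 * X 3 := by
      unfold mgen
      rw [show Finset.Icc 1 5 \ {4, 5} = ({1, 2, 3} : Finset ℕ) from by decide]
      simp [Finset.prod_insert, Finset.prod_pair]
      ring
    show mgen K 1 5 ^ 3 =
      -(X 3 ^ 2) * q2 K 4 * q1 K 5 + X 3 ^ 2 * q1 K 4 * q2 K 5
    rw [show q1 K 5 = X 5 * mgen K 2 4 - X 1 * X 2 * mgen K 1 5 from rfl,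
        show q2 K 5 = X 5 * (mgen K 1 4 + mgen K 3 4) - X 2 * X 3 * mgen K 1 5 from rfl,
        show q1 K 4 = mgen K 2 4 from rfl, show q2 K 4 = mgen K 1 4 + mgen K 3 4 from rfl,
        h14, h24, h34, h15]
    ring
  | succ k ih =>
    have hq1 : q1 K (k + 6) = X (k + 6) * q1 K (k + 5)
        - X (k + 3) ^ (k + 2) * q1 K (k + 4) * mgen K 1 (k + 6) := rfl
    have hq2 : q2 K (k + 6) = X (k + 6) * q2 K (k + 5)
        - X (k + 3) ^ (k + 2) * q2 K (k + 4) * mgen K 1 (k + 6) := rfl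
    show mgen K 1 (k + 6) ^ (k + 4) =
      -(X (k + 4) ^ (k + 3)) * q2 K (k + 5) * q1 K (k + 6) +
        X (k + 4) ^ (k + 3) * q1 K (k + 5) * q2 K (k + 6)
    rw [hq1, hq2, mgen_step_aux]
    linear_combination (X (k + 4) : MvPolynomial ℕ K) ^ (k + 4) * mgen K 1 (k + 5) * ih

/-- The identity
`(m₁^{(n)})^{n-2} = -x_{n-2}^{n-3} q₂^{(n-1)} q₁^{(n)} + x_{n-2}^{n-3} q₁^{(n-1)} q₂^{(n)}`
for `n ≥ 5`. -/
theorem stmt14 (K : Type*) [Field K] (n : ℕ) (hn : 5 ≤ n) :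
    mgen K 1 n ^ (n - 2) =
      -(X (n - 2) ^ (n - 3)) * q2 K (n - 1) * q1 K n +
        X (n - 2) ^ (n - 3) * q1 K (n - 1) * q2 K n := by
  obtain ⟨k, rfl⟩ : ∃ k, n = k + 5 := ⟨n - 5, by omega⟩
  exact key_aux K k
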